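/- Let 𝒜 be an algebra of subsets of 𝔾 and let μ : 𝒜 → [0,∞) be a content (μ(∅) = 0, μ finitely additive on disjoint sets) with μ(𝔾) = 1 such that: (i) for every prime p and every M ⊆ 𝒫 one has π_p⁻¹(M) ∈ 𝒜, and (ii) for any finitely many distinct primes p₁,…,p_k and sets M₁,…,M_k ⊆ 𝒫, μ(⋂_{i=1}^k π_{p_i}⁻¹(M_i)) = ∏_{i=1}^k P_{p_i}(M_i). For G ∈ 𝔾 define exp(G) := ∏_p p^{m(G_p)}, where m(λ) is the largest part of the partition λ (with m(0) = 0). Then for every n ≥ 1, if T_n := {G ∈ 𝔾 : exp(G) = n} belongs to 𝒜, then μ(T_n) = 0. Consequently, if all T_n belong to 𝒜, then 𝔾 is a countable disjoint union of μ-null sets of 𝒜, so μ is not countably additive. -/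

import Mathlib

open Filter Topology

/-- The type of all integer partitions (of all natural numbers `n`). -/
def PartitionsAll : Type := Σ n : ℕ, Nat.Partition n

/-- The empty partition of `0`. -/
def partZero : PartitionsAll := ⟨0, ⟨0, by simp, rfl⟩⟩

/-- The unique partition of `1`. -/
def partOne : PartitionsAll :=
  ⟨1, ⟨{1}, by intro i hi; rw [Multiset.mem_singleton] at hi; omega, rfl⟩⟩

instance : Zero PartitionsAll := ⟨partZero⟩

/-- The set of isomorphism classes of finite abelian groups, identified with the
finitely supported families of partitions indexed by the primes. -/
abbrev GG : Type := Nat.Primes →₀ PartitionsAll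

/-- The finite abelian `p`-group `⊕ⱼ ℤ/p^{λ_j}ℤ` corresponding to a partition `λ`. -/
abbrev pGroup (p : ℕ) (lam : PartitionsAll) : Type :=
  ∀ i : Fin lam.2.parts.toList.length, ZMod (p ^ lam.2.parts.toList.get i)

/-- The Cohen–Lenstra weight `w_p(λ) = 1/#Aut(G_{p,λ})`. -/
noncomputable def wCL (p : ℕ) (lam : PartitionsAll) : ℝ :=
  ((Nat.card (AddAut (pGroup p lam)) : ℝ))⁻¹

/-- `∏_{i=1}^∞ (1 - p^{-i})`. -/
noncomputable def clC (p : ℕ) : ℝ := ∏' i : ℕ, (1 - ((p : ℝ))⁻¹ ^ (i + 1))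

/-- The local Cohen–Lenstra probability `P_p(S) = (∑_{λ∈S} w_p(λ)) ∏_{i≥1}(1-p^{-i})`. -/
noncomputable def Pp (p : ℕ) (S : Set PartitionsAll) : ℝ :=
  (∑' lam : S, wCL p lam) * clC p

/-- The primes `≤ x`. -/
def primesUpTo (x : ℕ) : Finset ℕ := Nat.primesBelow (x + 1)

/-- The partial products `∏_{p ≤ x} P_p(S)`. -/
noncomputable def globPartial (S : Set PartitionsAll) (x : ℕ) : ℝ :=
  ∏ p ∈ primesUpTo x, Pp p S

/-- The global value `lim_{x→∞} ∏_{p ≤ x} P_p(S)` (the limit exists since all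
factors lie in `[0,1]`). -/
noncomputable def glob (S : Set PartitionsAll) : ℝ :=
  limUnder atTop (globPartial S)

/-- `O(S) = {G : G_p ∈ S for all primes p}`. -/
def Oset (S : Set PartitionsAll) : Set GG := {G : GG | ∀ p : Nat.Primes, G p ∈ S}

/-- `O(E₁, …, E_r) = O(E₁) ∪ … ∪ O(E_r)`. -/
def OOset {r : ℕ} (E : Fin r → Set PartitionsAll) : Set GG := ⋃ i, Oset (E i)

/-- Inclusion–exclusion value of `O(E₁, …, E_r)`. -/
noncomputable def PO {r : ℕ} (E : Fin r → Set PartitionsAll) : ℝ :=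
  ∑ T ∈ Finset.univ.filter (fun T : Finset (Fin r) => T.Nonempty),
    (-1 : ℝ) ^ (T.card + 1) * glob (⋂ i ∈ T, E i)

/-- The collection `𝔇` of sets `D(E₁,…,E_r;F₁,…,F_s)`. -/
def DD : Set (Set GG) :=
  {A | ∃ (r s : ℕ) (E : Fin r → Set PartitionsAll) (F : Fin s → Set PartitionsAll),
      OOset F ⊆ OOset E ∧ A = OOset E \ OOset F}

/-- The value `P(D)` of a set `D ∈ 𝔇` (well-defined: it depends only on the set `D`). -/
noncomputable def PDval (A : Set GG) : ℝ :=
  sSup {x : ℝ | ∃ (r s : ℕ) (E : Fin r → Set PartitionsAll) (F : Fin s → Set PartitionsAll),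
      OOset F ⊆ OOset E ∧ A = OOset E \ OOset F ∧ x = PO E - PO F}

/-- The outer measure `ν`. -/
noncomputable def nuCL (A : Set GG) : ℝ :=
  sInf {x : ℝ | ∃ C : ℕ → Set GG, (∀ i, C i ∈ DD) ∧ A ⊆ ⋃ i, C i ∧ x = ∑' i, PDval (C i)}

/-- The order of a finite abelian group. -/
def ordG (G : GG) : ℕ := G.prod fun p lam => (p : ℕ) ^ lam.1

/-- The exponent of a finite abelian group. -/
def expG (G : GG) : ℕ := G.prod fun p lam => (p : ℕ) ^ lam.2.parts.sup

lemma partitionsAll_eq_zero_of_sup_eq_zero (lam : PartitionsAll)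
    (h : lam.2.parts.sup = 0) : lam = 0 := by
  obtain ⟨m, P⟩ := lam
  have hparts : P.parts = 0 := by
    by_contra hne
    obtain ⟨a, ha⟩ := Multiset.exists_mem_of_ne_zero hne
    have h1 := P.parts_pos ha
    have h2 := Multiset.le_sup ha
    simp only [h] at h2
    omega
  have hm : m = 0 := by rw [← P.parts_sum, hparts]; rfl
  subst hm
  show (⟨0, P⟩ : PartitionsAll) = partZero
  exact congrArg (Sigma.mk 0) (Subsingleton.elim _ _)

lemma partZero_ne_partOne : partZero ≠ partOne := by
  intro h
  have := congrArg Sigma.fst h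
  simp [partZero, partOne] at this

lemma wCL_nonneg (p : ℕ) (lam : PartitionsAll) : 0 ≤ wCL p lam := by
  unfold wCL; positivity

lemma wCL_partZero (p : ℕ) : wCL p partZero = 1 := by
  have hlen : partZero.2.parts.toList.length = 0 := by
    show (Multiset.toList 0).length = 0
    rw [Multiset.toList_zero]; rfl
  haveI hsub : Subsingleton (pGroup p partZero) := by
    constructor
    intro a b
    funext i
    exact absurd i.2 (by omega)
  haveI h2 : Subsingleton (AddAut (pGroup p partZero)) :=
    ⟨fun a b => DFunLike.ext _ _ fun x => Subsingleton.elim _ _⟩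
  haveI : Nonempty (AddAut (pGroup p partZero)) := ⟨AddEquiv.refl _⟩
  unfold wCL
  rw [Nat.card_unique]
  norm_num

lemma wCL_partOne_ge (p : ℕ) (hp : p.Prime) : ((p : ℝ))⁻¹ ≤ wCL p partOne := by
  have hlen : partOne.2.parts.toList.length = 1 := by
    rw [Multiset.length_toList]; rfl
  have hget : ∀ i : Fin partOne.2.parts.toList.length,
      partOne.2.parts.toList.get i = 1 := by
    intro i
    have h1 : partOne.2.parts.toList.get i ∈ partOne.2.parts.toList :=
      List.get_mem _ i
    rw [Multiset.mem_toList] at h1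
    exact Multiset.mem_singleton.mp h1
  haveI hNZ : ∀ i : Fin partOne.2.parts.toList.length,
      NeZero (p ^ partOne.2.parts.toList.get i) :=
    fun i => ⟨pow_ne_zero _ hp.pos.ne'⟩
  haveI hFT : ∀ i : Fin partOne.2.parts.toList.length,
      Fintype (ZMod (p ^ partOne.2.parts.toList.get i)) :=
    fun i => ZMod.fintype _
  haveI hXfin : Finite (pGroup p partOne) := by infer_instance
  set i₀ : Fin partOne.2.parts.toList.length := ⟨0, by omega⟩ with hi₀
  set x₀ : pGroup p partOne := fun _ => 1 with hx₀
  have hgen : ∀ y : pGroup p partOne, y = (y i₀).val • x₀ := by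
    intro y
    funext i
    have hii : i = i₀ := by
      apply Fin.ext
      have := i.2
      omega
    subst hii
    rw [hx₀]
    simp only [Pi.smul_apply]
    rw [nsmul_eq_mul, mul_one]
    exact (ZMod.natCast_rightInverse (y i₀)).symm
  have hinj : Function.Injective (fun φ : AddAut (pGroup p partOne) => φ x₀) := by
    intro φ ψ h
    simp only at h
    apply DFunLike.ext
    intro y
    rw [hgen y, map_nsmul, map_nsmul, h]
  haveI hAfin : Finite (AddAut (pGroup p partOne)) := Finite.of_injective _ hinj
  have hcardX : Nat.card (pGroup p partOne) = p := by
    rw [Nat.card_pi]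
    have h1 : ∀ i : Fin partOne.2.parts.toList.length,
        Nat.card (ZMod (p ^ partOne.2.parts.toList.get i)) = p := by
      intro i
      rw [Nat.card_zmod, hget i, pow_one]
    rw [Finset.prod_congr rfl fun i _ => h1 i, Finset.prod_const, Finset.card_univ,
      Fintype.card_fin, hlen, pow_one]
  have hle : Nat.card (AddAut (pGroup p partOne)) ≤ p := by
    have := Nat.card_le_card_of_injective _ hinj
    rwa [hcardX] at this
  have hpos : 0 < Nat.card (AddAut (pGroup p partOne)) := Nat.card_pos
  unfold wCL
  apply inv_anti₀
  · exact_mod_cast hpos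
  · exact_mod_cast hle

lemma exists_primes_not_dvd (n : ℕ) (hn : 1 ≤ n) (ε : ℝ) (hε : 0 < ε) :
    ∃ I : Finset Nat.Primes, (∀ p ∈ I, ¬ ((p : ℕ) ∣ n)) ∧
      ∏ p ∈ I, (((p : ℕ) : ℝ) / (((p : ℕ) : ℝ) + 1)) < ε := by
  classical
  set f : Nat.Primes → ℝ := fun p => 1 / (((p : ℕ) : ℝ) + 1) with hf
  have hf0 : 0 ≤ f := fun p => by positivity
  have hfns : ¬ Summable f := by
    intro hs
    apply Nat.Primes.not_summable_one_div
    have h2 : Summable (fun p : Nat.Primes => 2 * f p) := hs.mul_left 2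
    apply h2.of_nonneg_of_le (fun p => by positivity)
    intro p
    have hp2 : (2 : ℝ) ≤ ((p : ℕ) : ℝ) := by exact_mod_cast p.2.two_le
    show 1 / ((p : ℕ) : ℝ) ≤ 2 * (1 / (((p : ℕ) : ℝ) + 1))
    rw [mul_one_div, div_le_div_iff₀ (by linarith) (by linarith)]
    linarith
  have hex : ∃ u : Finset Nat.Primes, ((n : ℝ) + 1) - Real.log ε < ∑ p ∈ u, f p := by
    by_contra hcon
    push_neg at hcon
    exact hfns (summable_of_sum_le hf0 hcon)
  obtain ⟨u, hu⟩ := hex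
  refine ⟨u.filter (fun p : Nat.Primes => ¬ ((p : ℕ) ∣ n)),
    fun p hp => (Finset.mem_filter.mp hp).2, ?_⟩
  set I := u.filter (fun p : Nat.Primes => ¬ ((p : ℕ) ∣ n)) with hI
  have hsplit : ∑ p ∈ u.filter (fun p : Nat.Primes => (p : ℕ) ∣ n), f p + ∑ p ∈ I, f p
      = ∑ p ∈ u, f p :=
    Finset.sum_filter_add_sum_filter_not u _ f
  have hcard : (u.filter (fun p : Nat.Primes => (p : ℕ) ∣ n)).card ≤ n + 1 := by
    have hsub : ∀ p ∈ u.filter (fun p : Nat.Primes => (p : ℕ) ∣ n),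
        (p : ℕ) ∈ Finset.range (n + 1) := by
      intro p hp
      rw [Finset.mem_range]
      have := Nat.le_of_dvd hn (Finset.mem_filter.mp hp).2
      omega
    calc (u.filter (fun p : Nat.Primes => (p : ℕ) ∣ n)).card
        ≤ (Finset.range (n + 1)).card :=
          Finset.card_le_card_of_injOn _ hsub fun a _ b _ h => Nat.Primes.coe_nat_injective h
      _ = n + 1 := Finset.card_range _
  have hdivsum : ∑ p ∈ u.filter (fun p : Nat.Primes => (p : ℕ) ∣ n), f p ≤ (n : ℝ) + 1 := by
    calc ∑ p ∈ u.filter (fun p : Nat.Primes => (p : ℕ) ∣ n), f p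
        ≤ (u.filter (fun p : Nat.Primes => (p : ℕ) ∣ n)).card • (1 : ℝ) := by
          apply Finset.sum_le_card_nsmul
          intro p _
          rw [hf]
          have h1 : (0:ℝ) < ((p : ℕ) : ℝ) + 1 := by positivity
          rw [div_le_one h1]
          have h2 : (0:ℝ) ≤ ((p:ℕ):ℝ) := by positivity
          linarith
      _ ≤ (n : ℝ) + 1 := by
          rw [nsmul_eq_mul, mul_one]
          exact_mod_cast hcard
  have hIsum : - Real.log ε < ∑ p ∈ I, f p := by linarith
  have hprod : ∏ p ∈ I, (((p : ℕ) : ℝ) / (((p : ℕ) : ℝ) + 1))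
      ≤ Real.exp (-∑ p ∈ I, f p) := by
    have heq : Real.exp (-∑ p ∈ I, f p) = ∏ p ∈ I, Real.exp (-(f p)) := by
      rw [← Real.exp_sum, Finset.sum_neg_distrib]
    rw [heq]
    apply Finset.prod_le_prod
    · intro p _; positivity
    · intro p _
      have h1 : (((p : ℕ) : ℝ) + 1) ≠ 0 := by positivity
      have h2 : ((p : ℕ) : ℝ) / (((p : ℕ) : ℝ) + 1) = 1 - f p := by
        rw [hf]; field_simp; ring
      rw [h2]
      have := Real.add_one_le_exp (-(f p))
      linarith
  calc ∏ p ∈ I, (((p : ℕ) : ℝ) / (((p : ℕ) : ℝ) + 1))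
      ≤ Real.exp (-∑ p ∈ I, f p) := hprod
    _ < Real.exp (Real.log ε) := Real.exp_lt_exp.mpr (by linarith)
    _ = ε := Real.exp_log hε

lemma expG_pos (G : GG) : 0 < expG G := by
  rw [expG, Finsupp.prod]
  exact Finset.prod_pos fun q _ => pow_pos q.2.pos _

lemma dvd_expG (G : GG) (p : Nat.Primes) (h : G p ≠ 0) : (p : ℕ) ∣ expG G := by
  have hmem : p ∈ G.support := Finsupp.mem_support_iff.mpr h
  have hsup : (G p).2.parts.sup ≠ 0 :=
    fun hs => h (partitionsAll_eq_zero_of_sup_eq_zero _ hs)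
  rw [expG, Finsupp.prod]
  exact dvd_trans (dvd_pow_self (p : ℕ) hsup)
    (Finset.dvd_prod_of_mem (fun q : Nat.Primes => ((q : ℕ)) ^ (G q).2.parts.sup) hmem)

/-- For any content `μ` on an algebra `𝒜` of subsets of `𝔾` compatible with the
local Cohen–Lenstra probabilities, the set `T_n = {G : exp(G) = n}` has content `0`
whenever it is in `𝒜`; consequently, if all `T_n` are in `𝒜`, then `𝔾` is a countable
disjoint union of `μ`-null sets of `𝒜`, so `μ` is not countably additive. -/
theorem exponent_null_content
    (A : Set (Set GG)) (μ : Set GG → ℝ)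
    (hempty : ∅ ∈ A)
    (hcompl : ∀ s ∈ A, sᶜ ∈ A)
    (hunion : ∀ s ∈ A, ∀ t ∈ A, s ∪ t ∈ A)
    (hμempty : μ ∅ = 0)
    (hnonneg : ∀ s ∈ A, 0 ≤ μ s)
    (hadd : ∀ s ∈ A, ∀ t ∈ A, Disjoint s t → μ (s ∪ t) = μ s + μ t)
    (htotal : μ Set.univ = 1)
    (hproj : ∀ (p : Nat.Primes) (M : Set PartitionsAll), (fun G : GG => G p) ⁻¹' M ∈ A)
    (hindep : ∀ (I : Finset Nat.Primes) (M : Nat.Primes → Set PartitionsAll),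
      μ (⋂ p ∈ I, (fun G : GG => G p) ⁻¹' (M p)) = ∏ p ∈ I, Pp (p : ℕ) (M p)) :
    (∀ n : ℕ, 1 ≤ n → {G : GG | expG G = n} ∈ A → μ {G : GG | expG G = n} = 0) ∧
      ((∀ n : ℕ, 1 ≤ n → {G : GG | expG G = n} ∈ A) →
        (Pairwise (Function.onFun Disjoint fun n : ℕ => {G : GG | expG G = n + 1})) ∧
        (⋃ n : ℕ, {G : GG | expG G = n + 1}) = Set.univ ∧
        (∀ n : ℕ, μ {G : GG | expG G = n + 1} = 0) ∧
        ¬ (∀ (C : ℕ → Set GG), (∀ i, C i ∈ A) → (⋃ i, C i) ∈ A →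
            Pairwise (Function.onFun Disjoint C) →
            HasSum (fun i => μ (C i)) (μ (⋃ i, C i)))) := by
  classical
  have huniv : Set.univ ∈ A := by
    have := hcompl ∅ hempty
    rwa [Set.compl_empty] at this
  have hinter : ∀ s ∈ A, ∀ t ∈ A, s ∩ t ∈ A := by
    intro s hs t ht
    have heq : s ∩ t = (sᶜ ∪ tᶜ)ᶜ := by rw [Set.compl_union, compl_compl, compl_compl]
    rw [heq]
    exact hcompl _ (hunion _ (hcompl s hs) _ (hcompl t ht))
  have hdiff : ∀ s ∈ A, ∀ t ∈ A, t \ s ∈ A := by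
    intro s hs t ht
    rw [Set.diff_eq]
    exact hinter _ ht _ (hcompl s hs)
  have hmono : ∀ s ∈ A, ∀ t ∈ A, s ⊆ t → μ s ≤ μ t := by
    intro s hs t ht hst
    have hts : t \ s ∈ A := hdiff s hs t ht
    have hdisj : Disjoint s (t \ s) := disjoint_sdiff_self_right
    have h1 := hadd s hs (t \ s) hts hdisj
    rw [Set.union_diff_cancel hst] at h1
    have h2 := hnonneg (t \ s) hts
    linarith
  have hbiA : ∀ (J : Finset Nat.Primes) (M : Nat.Primes → Set PartitionsAll),
      (⋂ p ∈ J, (fun G : GG => G p) ⁻¹' (M p)) ∈ A := by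
    intro J M
    induction J using Finset.induction_on with
    | empty => simpa using huniv
    | insert _ _ _ ih =>
        rw [Finset.set_biInter_insert]
        exact hinter _ (hproj _ _) _ ih
  have hPp : ∀ p : Nat.Primes, 0 ≤ Pp (p : ℕ) ({0} : Set PartitionsAll) ∧
      Pp (p : ℕ) ({0} : Set PartitionsAll) ≤ ((p : ℕ) : ℝ) / (((p : ℕ) : ℝ) + 1) := by
    intro p
    have hq : ((p : ℕ)).Prime := p.2
    have huniv1 : Pp (p : ℕ) Set.univ = 1 := by
      have h := hindep {p} (fun _ => Set.univ)
      rw [Finset.set_biInter_singleton, Set.preimage_univ, htotal, Finset.prod_singleton] at h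
      exact h.symm
    rw [Pp, tsum_univ] at huniv1
    have hsumm : Summable (wCL (p : ℕ)) := by
      by_contra hns
      rw [tsum_eq_zero_of_not_summable hns, zero_mul] at huniv1
      exact one_ne_zero huniv1.symm
    have hTge : 1 + (((p : ℕ) : ℝ))⁻¹ ≤ ∑' lam, wCL (p : ℕ) lam := by
      have hs : ∑ lam ∈ ({partZero, partOne} : Finset PartitionsAll), wCL (p : ℕ) lam
          ≤ ∑' lam, wCL (p : ℕ) lam :=
        Summable.sum_le_tsum _ (fun lam _ => wCL_nonneg _ lam) hsumm
      rw [Finset.sum_pair partZero_ne_partOne, wCL_partZero] at hs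
      have := wCL_partOne_ge (p : ℕ) hq
      linarith
    have hp0 : (0 : ℝ) < ((p : ℕ) : ℝ) := by exact_mod_cast hq.pos
    have hTpos : (0 : ℝ) < ∑' lam, wCL (p : ℕ) lam := by
      have h3 : (0 : ℝ) ≤ (((p : ℕ) : ℝ))⁻¹ := by positivity
      linarith
    have hclC : clC (p : ℕ) = 1 / (∑' lam, wCL (p : ℕ) lam) := by
      rw [eq_div_iff hTpos.ne', mul_comm]
      exact huniv1
    have hP0 : Pp (p : ℕ) ({0} : Set PartitionsAll) = clC (p : ℕ) := by
      rw [Pp, tsum_singleton, show (0 : PartitionsAll) = partZero from rfl,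
        wCL_partZero, one_mul]
    constructor
    · rw [hP0, hclC]; positivity
    · rw [hP0, hclC, div_le_div_iff₀ hTpos (by positivity)]
      have key : ((p : ℕ) : ℝ) * (1 + (((p : ℕ) : ℝ))⁻¹) = ((p : ℕ) : ℝ) + 1 := by
        field_simp
      have h4 := mul_le_mul_of_nonneg_left hTge hp0.le
      rw [key] at h4
      linarith
  have hkey : ∀ n : ℕ, 1 ≤ n → {G : GG | expG G = n} ∈ A → μ {G : GG | expG G = n} = 0 := by
    intro n hn hTn
    have hge : 0 ≤ μ {G : GG | expG G = n} := hnonneg _ hTn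
    have hlt : ∀ ε : ℝ, 0 < ε → μ {G : GG | expG G = n} < ε := by
      intro ε hε
      obtain ⟨I, hInd, hIprod⟩ := exists_primes_not_dvd n hn ε hε
      have hsub : {G : GG | expG G = n} ⊆
          ⋂ p ∈ I, (fun G : GG => G p) ⁻¹' ({0} : Set PartitionsAll) := by
        intro G hG
        have hG' : expG G = n := hG
        simp only [Set.mem_iInter]
        intro p hp
        simp only [Set.mem_preimage, Set.mem_singleton_iff]
        by_contra h0
        exact hInd p hp (by rw [← hG']; exact dvd_expG G p h0)
      calc μ {G : GG | expG G = n}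
          ≤ μ (⋂ p ∈ I, (fun G : GG => G p) ⁻¹' ({0} : Set PartitionsAll)) :=
            hmono _ hTn _ (hbiA I _) hsub
        _ = ∏ p ∈ I, Pp (p : ℕ) ({0} : Set PartitionsAll) := hindep I _
        _ ≤ ∏ p ∈ I, (((p : ℕ) : ℝ) / (((p : ℕ) : ℝ) + 1)) :=
            Finset.prod_le_prod (fun p _ => (hPp p).1) (fun p _ => (hPp p).2)
        _ < ε := hIprod
    by_contra hne
    have hpos : 0 < μ {G : GG | expG G = n} := lt_of_le_of_ne hge (Ne.symm hne)
    exact absurd (hlt _ hpos) (lt_irrefl _)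
  have hpair : Pairwise (Function.onFun Disjoint fun n : ℕ => {G : GG | expG G = n + 1}) := by
    intro m k hmk
    simp only [Function.onFun]
    rw [Set.disjoint_left]
    intro G hG1 hG2
    simp only [Set.mem_setOf_eq] at hG1 hG2
    omega
  have hunion_univ : (⋃ n : ℕ, {G : GG | expG G = n + 1}) = Set.univ := by
    ext G
    simp only [Set.mem_iUnion, Set.mem_setOf_eq, Set.mem_univ, iff_true]
    have := expG_pos G
    exact ⟨expG G - 1, by omega⟩
  refine ⟨hkey, fun hall => ⟨hpair, hunion_univ,
    fun k => hkey (k + 1) (by omega) (hall (k + 1) (by omega)), ?_⟩⟩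
  intro hCA
  have h := hCA (fun k => {G : GG | expG G = k + 1})
    (fun k => hall (k + 1) (by omega))
    (by rw [hunion_univ]; exact huniv)
    hpair
  rw [hunion_univ, htotal] at h
  have he : (fun k : ℕ => μ {G : GG | expG G = k + 1}) = fun _ : ℕ => (0 : ℝ) := by
    funext k
    exact hkey (k + 1) (by omega) (hall (k + 1) (by omega))
  rw [he] at h
  exact one_ne_zero (h.unique hasSum_zero)
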